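/- Every closed finite simple graph is weakly closed. -/

import Mathlib

/-- `G` is closed with respect to the labeling `σ` of its vertices by `1, …, n`. -/
def ClosedWrt {V : Type*} {n : ℕ} (G : SimpleGraph V) (σ : V ≃ Fin n) : Prop :=
  ∀ i j k l : V, G.Adj i j → G.Adj k l → σ i < σ j → σ k < σ l →
    (i = k → j ≠ l → G.Adj j l) ∧ (j = l → i ≠ k → G.Adj i k)

/-- `G` is weakly closed: some labeling of the vertices by `1, …, n` is such that for
every edge `{i, j}` with `i < j` and every `i < k < j`, `{i,k} ∈ E(G)` or `{k,j} ∈ E(G)`. -/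
def WeaklyClosed {V : Type*} [Fintype V] (G : SimpleGraph V) : Prop :=
  ∃ σ : V ≃ Fin (Fintype.card V), ∀ i j k : V,
    G.Adj i j → σ i < σ k → σ k < σ j → G.Adj i k ∨ G.Adj k j

lemma closedWrt_rev {V : Type*} {n : ℕ} {G : SimpleGraph V} {τ : V ≃ Fin n}
    (hc : ClosedWrt G τ) : ClosedWrt G (τ.trans Fin.revPerm) := by
  intro i j k l hij hkl hij' hkl'
  simp only [Equiv.trans_apply, Fin.revPerm_apply, Fin.rev_lt_rev] at hij' hkl'
  obtain ⟨h1, h2⟩ := hc j i l k hij.symm hkl.symm hij' hkl'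
  exact ⟨h2, h1⟩

lemma exists_step {V : Type*} {G : SimpleGraph V} :
    ∀ (m : ℕ) {n : ℕ} (τ : V ≃ Fin n), ClosedWrt G τ →
      ∀ (x y : V) (w : G.Walk x y), w.length ≤ m → τ x < τ y →
        ∃ (z : V) (q : G.Walk z y), G.Adj x z ∧ τ x < τ z ∧ τ z ≤ τ y ∧ q.length < m := by
  intro m
  induction m with
  | zero =>
    intro n τ hc x y w hw hxy
    cases w with
    | nil => exact absurd hxy (lt_irrefl _)
    | cons h p => simp [SimpleGraph.Walk.length_cons] at hw
  | succ m ih =>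
    intro n τ hc x y w hw hxy
    cases w with
    | nil => exact absurd hxy (lt_irrefl _)
    | @cons _ v _ h p =>
      rw [SimpleGraph.Walk.length_cons] at hw
      have hp : p.length ≤ m := Nat.le_of_succ_le_succ hw
      rcases lt_trichotomy (τ v) (τ y) with hvy | hvy | hvy
      · -- τ v < τ y
        rcases lt_trichotomy (τ x) (τ v) with hxv | hxv | hxv
        · exact ⟨v, p, h, hxv, le_of_lt hvy, Nat.lt_succ_of_le hp⟩
        · exact absurd (τ.injective hxv) h.ne
        · -- τ v < τ x
          obtain ⟨z1, q1, hvz1, hvz1', hz1y, hq1⟩ := ih τ hc v y p hp hvy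
          by_cases hz1x : z1 = x
          · subst hz1x
            obtain ⟨z, q, h1, h2, h3, h4⟩ := ih τ hc z1 y q1 (Nat.le_of_lt hq1) hxy
            exact ⟨z, q, h1, h2, h3, Nat.lt_succ_of_lt h4⟩
          · have hadj : G.Adj x z1 :=
              (hc v x v z1 h.symm hvz1 hxv hvz1').1 rfl (fun e => hz1x e.symm)
            rcases lt_trichotomy (τ x) (τ z1) with hl | hl | hl
            · exact ⟨z1, q1, hadj, hl, hz1y, Nat.lt_succ_of_lt hq1⟩
            · exact absurd (τ.injective hl) (fun e => hz1x e.symm)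
            · obtain ⟨z, q, h1, h2, h3, h4⟩ := ih τ hc x y
                (SimpleGraph.Walk.cons hadj q1)
                (by rw [SimpleGraph.Walk.length_cons]; exact hq1) hxy
              exact ⟨z, q, h1, h2, h3, Nat.lt_succ_of_lt h4⟩
      · -- v = y
        have : v = y := τ.injective hvy
        subst this
        exact ⟨v, SimpleGraph.Walk.nil, h, hxy, le_rfl, Nat.succ_pos _⟩
      · -- τ v > τ y : use reversed ordering
        have hrev := closedWrt_rev hc
        obtain ⟨z1, q1, hvz1, h1', h2', hq1⟩ := ih (τ.trans Fin.revPerm) hrev v y p hp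
          (by simpa [Fin.rev_lt_rev] using hvy)
        simp only [Equiv.trans_apply, Fin.revPerm_apply, Fin.rev_lt_rev, Fin.rev_le_rev] at h1' h2'
        -- h1' : τ z1 < τ v, h2' : τ y ≤ τ z1
        have hxz1 : x ≠ z1 := fun e => absurd (e ▸ h2') (not_le.mpr hxy)
        have hadj : G.Adj x z1 :=
          (hc x v z1 v h hvz1.symm (hxy.trans hvy) h1').2 rfl hxz1
        rcases eq_or_lt_of_le h2' with he | he
        · have : z1 = y := τ.injective he.symm
          subst this
          exact ⟨z1, SimpleGraph.Walk.nil, hadj, hxy, le_rfl, Nat.succ_pos _⟩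
        · obtain ⟨z, q, ha, hb, hcc, hd⟩ := ih τ hc x y
            (SimpleGraph.Walk.cons hadj q1)
            (by rw [SimpleGraph.Walk.length_cons]; exact hq1) hxy
          exact ⟨z, q, ha, hb, hcc, Nat.lt_succ_of_lt hd⟩

lemma umbrella {V : Type*} {G : SimpleGraph V} {n : ℕ} (τ : V ≃ Fin n)
    (hc : ClosedWrt G τ)
    (hconv : ∀ a b c : V, G.Reachable a b → τ a < τ c → τ c < τ b → G.Reachable a c) :
    ∀ (d : ℕ) (i j k : V), G.Adj i j → τ i < τ k → τ k < τ j →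
      (τ j : ℕ) - (τ i : ℕ) ≤ d → G.Adj k j := by
  intro d
  induction d with
  | zero =>
    intro i j k hij hik hkj hd
    rw [Fin.lt_iff_val_lt_val] at hik hkj
    omega
  | succ d ih =>
    intro i j k hij hik hkj hd
    have hij' : τ i < τ j := hik.trans hkj
    have hlt : (τ i : ℕ) + 1 < n := lt_of_le_of_lt (Nat.succ_le_of_lt hik) (τ k).isLt
    set s : V := τ.symm ⟨(τ i : ℕ) + 1, hlt⟩ with hs
    have hts : (τ s : ℕ) = (τ i : ℕ) + 1 := by simp [hs]
    have his : τ i < τ s := by rw [Fin.lt_iff_val_lt_val, hts]; omega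
    have hsj : τ s < τ j := by
      rw [Fin.lt_iff_val_lt_val, hts]
      have := hkj
      rw [Fin.lt_iff_val_lt_val] at hik hkj
      omega
    -- s is reachable from i
    have hreach : G.Reachable i s := hconv i j s hij.reachable his hsj
    obtain ⟨w⟩ := hreach
    obtain ⟨z, q, hizadj, hiz, hzs, hq⟩ := exists_step w.length τ hc i s w le_rfl his
    have hzs' : z = s := by
      apply τ.injective
      apply Fin.ext
      rw [Fin.lt_iff_val_lt_val] at hiz
      rw [Fin.le_iff_val_le_val] at hzs
      omega
    subst hzs'
    have hsj' : s ≠ j := fun e => absurd (e ▸ hsj) (lt_irrefl _)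
    have hadj_sj : G.Adj s j := (hc i s i j hizadj hij his hij').1 rfl hsj'
    by_cases hks : k = s
    · exact hks ▸ hadj_sj
    · have hzk : τ s < τ k := by
        rcases lt_or_eq_of_le (show τ s ≤ τ k by
          rw [Fin.le_iff_val_le_val, hts]; exact Nat.succ_le_of_lt hik) with h | h
        · exact h
        · exact absurd (τ.injective h) (fun e => hks e.symm)
      refine ih s j k hadj_sj hzk hkj ?_
      rw [Fin.lt_iff_val_lt_val] at hij'
      omega

open Classical in
noncomputable def cmin {V : Type*} [Fintype V] (G : SimpleGraph V) {n : ℕ}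
    (σ : V ≃ Fin n) (v : V) : Fin n :=
  ((Finset.univ.filter fun w => G.Reachable v w).image σ).min'
    ⟨σ v, Finset.mem_image_of_mem σ (by simp)⟩

open Classical in
lemma cmin_exists {V : Type*} [Fintype V] (G : SimpleGraph V) {n : ℕ} (σ : V ≃ Fin n)
    (v : V) : ∃ u, G.Reachable v u ∧ σ u = cmin G σ v := by
  have := Finset.min'_mem ((Finset.univ.filter fun w => G.Reachable v w).image σ)
    ⟨σ v, Finset.mem_image_of_mem σ (by simp)⟩
  rw [Finset.mem_image] at this
  obtain ⟨u, hu, hu'⟩ := this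
  rw [Finset.mem_filter] at hu
  exact ⟨u, hu.2, hu'⟩

open Classical in
lemma cmin_congr {V : Type*} [Fintype V] (G : SimpleGraph V) {n : ℕ} (σ : V ≃ Fin n)
    {v w : V} (h : G.Reachable v w) : cmin G σ v = cmin G σ w := by
  unfold cmin
  congr 2
  ext x
  simp only [Finset.mem_filter, Finset.mem_univ, true_and]
  exact ⟨fun hx => h.symm.trans hx, fun hx => h.trans hx⟩

lemma reachable_of_cmin_eq {V : Type*} [Fintype V] (G : SimpleGraph V) {n : ℕ} (σ : V ≃ Fin n)
    {v w : V} (h : cmin G σ v = cmin G σ w) : G.Reachable v w := by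
  obtain ⟨u, hu, hu'⟩ := cmin_exists G σ v
  obtain ⟨u', hu2, hu2'⟩ := cmin_exists G σ w
  have : u = u' := σ.injective (by rw [hu', hu2', h])
  exact hu.trans (this ▸ hu2.symm)


private theorem weaklyClosed_of_closed_aux {V : Type*} [Fintype V] (G : SimpleGraph V)
    (h : ∃ σ : V ≃ Fin (Fintype.card V), ClosedWrt G σ) :
    ∃ σ : V ≃ Fin (Fintype.card V), ∀ i j k : V,
      G.Adj i j → σ i < σ k → σ k < σ j → G.Adj i k ∨ G.Adj k j := by
  classical
  obtain ⟨σ, hσ⟩ := h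
  set g : Fin (Fintype.card V) → (Fin (Fintype.card V) ×ₗ Fin (Fintype.card V)) := fun a => toLex (cmin G σ (σ.symm a), a) with hg
  have ginj : Function.Injective g := by
    intro a b hab
    have := congrArg (fun x => (ofLex x).2) hab
    simpa [hg] using this
  set π : Equiv.Perm (Fin (Fintype.card V)) := Tuple.sort g with hπ
  have hmono : StrictMono (g ∘ π) :=
    (Tuple.monotone_sort g).strictMono_of_injective (ginj.comp π.injective)
  set τ : V ≃ Fin (Fintype.card V) := σ.trans π.symm with hτ
  have τlt : ∀ a b : V, τ a < τ b ↔
      (cmin G σ a < cmin G σ b ∨ (cmin G σ a = cmin G σ b ∧ σ a < σ b)) := by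
    intro a b
    have h1 : τ a < τ b ↔ (g ∘ π) (τ a) < (g ∘ π) (τ b) := (hmono.lt_iff_lt).symm
    have h2 : (g ∘ π) (τ a) = g (σ a) := by
      simp [hτ, Function.comp, Equiv.apply_symm_apply]
    have h3 : (g ∘ π) (τ b) = g (σ b) := by
      simp [hτ, Function.comp, Equiv.apply_symm_apply]
    rw [h1, h2, h3, hg]
    simp only [Equiv.symm_apply_apply]
    exact Prod.Lex.lt_iff
  have hc' : ClosedWrt G τ := by
    intro i j k l hij hkl h1 h2
    have e1 : cmin G σ i = cmin G σ j := cmin_congr G σ hij.reachable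
    have e2 : cmin G σ k = cmin G σ l := cmin_congr G σ hkl.reachable
    rw [τlt] at h1 h2
    have s1 : σ i < σ j := by
      rcases h1 with h | h
      · exact absurd (e1 ▸ h) (lt_irrefl _)
      · exact h.2
    have s2 : σ k < σ l := by
      rcases h2 with h | h
      · exact absurd (e2 ▸ h) (lt_irrefl _)
      · exact h.2
    exact hσ i j k l hij hkl s1 s2
  have hconv : ∀ a b c : V, G.Reachable a b → τ a < τ c → τ c < τ b → G.Reachable a c := by
    intro a b c hab h1 h2
    have e1 : cmin G σ a = cmin G σ b := cmin_congr G σ hab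
    rw [τlt] at h1 h2
    apply reachable_of_cmin_eq G σ
    rcases h1 with h | h
    · rcases h2 with h' | h'
      · exact absurd (e1 ▸ (h.trans h')) (lt_irrefl _)
      · exact absurd (e1 ▸ (h'.1 ▸ h)) (lt_irrefl _)
    · exact h.1
  refine ⟨τ, fun i j k hij h1 h2 => Or.inr ?_⟩
  exact umbrella τ hc' hconv ((τ j : ℕ) - (τ i : ℕ)) i j k hij h1 h2 le_rfl

/-- Every closed finite simple graph is weakly closed. -/
theorem weaklyClosed_of_closed {V : Type*} [Fintype V] (G : SimpleGraph V)
    (h : ∃ σ : V ≃ Fin (Fintype.card V), ClosedWrt G σ) : WeaklyClosed G :=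
  weaklyClosed_of_closed_aux G h
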